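/- Let κ, α and N be positive integers with α ≥ 2. Let C_S and C_T be legal configurations for capacity κ with |C_S| = |C_T| = N, with the same underlying multiset of items U(C_S) = U(C_T), such that α·x ≤ κ for every item x of U(C_S), and such that the average slack of C_S, namely (1/N)·Σ_{B ∈ C_S} slack(B), is at least κ/(α+1) + 3ακ/((α+1)N). Then C_S is reconfigurable to C_T for capacity κ. -/

import Mathlib

/-- A bunch is a multiset of items (item = positive integer, encoded as `ℕ`). -/
abbrev Bunch := Multiset ℕ

/-- A configuration is a multiset of bunches. -/
abbrev Config := Multiset Bunch

/-- The volume of a bunch is the sum of its items. -/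
def vol (B : Bunch) : ℕ := B.sum

/-- A configuration is legal for capacity `κ` if every bunch has volume at most `κ`. -/
def Legal (κ : ℕ) (C : Config) : Prop := ∀ B ∈ C, vol B ≤ κ

/-- The total slack of a configuration for capacity `κ`. -/
def slackSum (κ : ℕ) (C : Config) : ℕ := (C.map fun B => κ - vol B).sum

/-- `C'` is obtained from `C` by moving the single item `u` from a donor bunch `Bd`
to a (different occurrence of a) recipient bunch `Br`, respecting the capacity `κ`. -/
def AdjacentVia (κ u : ℕ) (C C' : Config) : Prop :=
  ∃ (rest : Config) (Bd Br : Bunch),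
    u ∈ Bd ∧ vol Br + u ≤ κ ∧
    C = Bd ::ₘ Br ::ₘ rest ∧ C' = Bd.erase u ::ₘ (u ::ₘ Br) ::ₘ rest

/-- Two configurations are adjacent if one is obtained from the other by moving a single item. -/
def Adjacent (κ : ℕ) (C C' : Config) : Prop := ∃ u, AdjacentVia κ u C C'

/-- One step of a reconfiguration sequence: both configurations are legal and adjacent. -/
def Step (κ : ℕ) (C C' : Config) : Prop := Legal κ C ∧ Legal κ C' ∧ Adjacent κ C C'

/-- `CS` is reconfigurable to `CT` for capacity `κ`: there is a sequence of legal
configurations for capacity `κ` from `CS` to `CT` with consecutive ones adjacent. -/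
def Reconfigurable (κ : ℕ) (CS CT : Config) : Prop :=
  Relation.ReflTransGen (Step κ) CS CT

/- helpers -/

lemma vol_mono {A B : Bunch} (h : A ≤ B) : vol A ≤ vol B := by
  obtain ⟨u, rfl⟩ := Multiset.le_iff_exists_add.mp h
  simp [vol]

lemma vol_erase_add {A : Bunch} {z : ℕ} (hz : z ∈ A) : vol (A.erase z) + z = vol A := by
  have : (z ::ₘ A.erase z).sum = A.sum := by rw [Multiset.cons_erase hz]
  simpa [vol, Multiset.sum_cons, Nat.add_comm] using this

lemma mem_sum_iff {C : Config} {x : ℕ} : x ∈ C.sum ↔ ∃ B ∈ C, x ∈ B := by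
  induction C using Multiset.induction_on with
  | empty => simp
  | cons B t ih =>
    simp [Multiset.sum_cons, Multiset.mem_add, ih]

lemma mem_le_sum {C : Config} {B : Bunch} (h : B ∈ C) : B ≤ C.sum := by
  obtain ⟨t, rfl⟩ := Multiset.exists_cons_of_mem h
  simp [Multiset.sum_cons]

lemma sum_sum (C : Config) : (C.sum).sum = (C.map vol).sum := by
  induction C using Multiset.induction_on with
  | empty => simp
  | cons B t ih => simp [Multiset.sum_cons, vol, ih]

lemma exists_max_image {β : Type*} (s : Multiset β) (f : β → ℕ) (h : s ≠ 0) :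
    ∃ a ∈ s, ∀ b ∈ s, f b ≤ f a := by
  induction s using Multiset.induction_on with
  | empty => exact absurd rfl h
  | cons a t ih =>
    rcases eq_or_ne t 0 with rfl | ht
    · exact ⟨a, Multiset.mem_cons_self _ _, by simp⟩
    · obtain ⟨m, hm, hmax⟩ := ih ht
      rcases le_total (f m) (f a) with h1 | h1
      · refine ⟨a, Multiset.mem_cons_self _ _, ?_⟩
        intro b hb
        rcases Multiset.mem_cons.mp hb with rfl | hb
        · exact le_refl _
        · exact le_trans (hmax b hb) h1
      · refine ⟨m, Multiset.mem_cons_of_mem hm, ?_⟩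
        intro b hb
        rcases Multiset.mem_cons.mp hb with rfl | hb
        · exact h1
        · exact hmax b hb

lemma exists_min_mem (s : Multiset ℕ) (h : s ≠ 0) :
    ∃ a ∈ s, ∀ b ∈ s, a ≤ b := by
  obtain ⟨a, ha, hmax⟩ := exists_max_image s (fun n => s.sum - n) h
  refine ⟨a, ha, fun b hb => ?_⟩
  have h1 := hmax b hb
  have hbs : b ≤ s.sum := Multiset.single_le_sum (fun x _ => Nat.zero_le x) b hb
  have has : a ≤ s.sum := Multiset.single_le_sum (fun x _ => Nat.zero_le x) a ha
  omega

/-- the basic move as a Step -/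
lemma step_move {κ : ℕ} {A R : Bunch} {rest : Config} {z : ℕ}
    (hz : z ∈ A) (hfit : vol R + z ≤ κ)
    (hleg : Legal κ (A ::ₘ R ::ₘ rest)) :
    Step κ (A ::ₘ R ::ₘ rest) (A.erase z ::ₘ (z ::ₘ R) ::ₘ rest) := by
  refine ⟨hleg, ?_, z, rest, A, R, hz, hfit, rfl, rfl⟩
  intro B hB
  rcases Multiset.mem_cons.mp hB with rfl | hB
  · exact le_trans (vol_mono (Multiset.erase_le _ _)) (hleg A (Multiset.mem_cons_self _ _))
  rcases Multiset.mem_cons.mp hB with rfl | hB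
  · simpa [vol, Multiset.sum_cons, Nat.add_comm] using hfit
  · exact hleg B (Multiset.mem_cons_of_mem (Multiset.mem_cons_of_mem hB))

lemma step_sum_card {κ : ℕ} {C C' : Config} (h : Step κ C C') :
    C'.sum = C.sum ∧ Multiset.card C' = Multiset.card C := by
  obtain ⟨_, _, u, rest, Bd, Br, hu, _, rfl, rfl⟩ := h
  constructor
  · simp only [Multiset.sum_cons]
    rw [← add_assoc, ← add_assoc]
    congr 1
    rw [add_comm (Bd.erase u) _, Multiset.cons_add, ← add_comm (Bd.erase u) _ ]
    rw [← Multiset.cons_add, Multiset.cons_erase hu]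
  · simp

lemma step_symm {κ : ℕ} {C C' : Config} (h : Step κ C C') : Step κ C' C := by
  obtain ⟨hleg, hleg', u, rest, Bd, Br, hu, hfit, rfl, rfl⟩ := h
  refine ⟨hleg', hleg, u, rest, u ::ₘ Br, Bd.erase u, Multiset.mem_cons_self _ _, ?_, ?_, ?_⟩
  · have := vol_erase_add hu
    have hBd : vol Bd ≤ κ := hleg Bd (Multiset.mem_cons_self _ _)
    omega
  · exact Multiset.cons_swap _ _ _
  · rw [Multiset.erase_cons_head, Multiset.cons_erase hu, Multiset.cons_swap]

lemma reconf_symm {κ : ℕ} {C C' : Config} (h : Reconfigurable κ C C') : Reconfigurable κ C' C :=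
  by
    haveI : Std.Symm (Step κ) := ⟨fun _ _ hs => step_symm hs⟩
    exact Std.Symm.symm (r := Relation.ReflTransGen (Step κ)) _ _ h

lemma reconf_sum_card {κ : ℕ} {C C' : Config} (h : Reconfigurable κ C C') :
    C'.sum = C.sum ∧ Multiset.card C' = Multiset.card C := by
  induction h with
  | refl => exact ⟨rfl, rfl⟩
  | tail _ hs ih =>
    obtain ⟨h1, h2⟩ := step_sum_card hs
    exact ⟨h1.trans ih.1, h2.trans ih.2⟩

lemma step_frame {κ : ℕ} {C C' : Config} (F : Bunch) (hF : vol F ≤ κ)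
    (h : Step κ C C') : Step κ (F ::ₘ C) (F ::ₘ C') := by
  obtain ⟨hleg, hleg', u, rest, Bd, Br, hu, hfit, rfl, rfl⟩ := h
  refine ⟨?_, ?_, u, F ::ₘ rest, Bd, Br, hu, hfit, ?_, ?_⟩
  · intro B hB
    rcases Multiset.mem_cons.mp hB with rfl | hB
    · exact hF
    · exact hleg B hB
  · intro B hB
    rcases Multiset.mem_cons.mp hB with rfl | hB
    · exact hF
    · exact hleg' B hB
  · rw [Multiset.cons_swap F Bd, Multiset.cons_swap F Br]
  · rw [Multiset.cons_swap F (Bd.erase u), Multiset.cons_swap F (u ::ₘ Br)]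

lemma reconf_frame {κ : ℕ} {C C' : Config} (F : Bunch) (hF : vol F ≤ κ)
    (h : Reconfigurable κ C C') : Reconfigurable κ (F ::ₘ C) (F ::ₘ C') := by
  induction h with
  | refl => exact Relation.ReflTransGen.refl
  | tail _ hs ih => exact ih.tail (step_frame F hF hs)

/-- gather: move the submultiset F (of the items of D) into the bin T -/
lemma gather {κ : ℕ} : ∀ (n : ℕ) (F : Multiset ℕ) (T : Bunch) (D : Config),
    Multiset.card F = n → Legal κ (T ::ₘ D) → F ≤ D.sum → vol T + F.sum ≤ κ →
    ∃ D' : Config, Reconfigurable κ (T ::ₘ D) ((T + F) ::ₘ D') ∧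
      D'.sum = D.sum - F ∧ Multiset.card D' = Multiset.card D ∧ Legal κ D' := by
  intro n
  induction n with
  | zero =>
    intro F T D hcard hleg hFle hfit
    have : F = 0 := Multiset.card_eq_zero.mp hcard
    subst this
    refine ⟨D, ?_, by simp, rfl, fun B hB => hleg B (Multiset.mem_cons_of_mem hB)⟩
    simp only [add_zero]
    exact Relation.ReflTransGen.refl
  | succ n ih =>
    intro F T D hcard hleg hFle hfit
    have hF0 : F ≠ 0 := by
      intro h; subst h; simp at hcard
    obtain ⟨x, hxF⟩ := Multiset.exists_mem_of_ne_zero hF0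
    have hxD : x ∈ D.sum := Multiset.mem_of_le hFle hxF
    obtain ⟨B, hBD, hxB⟩ := mem_sum_iff.mp hxD
    obtain ⟨D0, rfl⟩ := Multiset.exists_cons_of_mem hBD
    -- step : move x from B to T
    have hxle : x ≤ F.sum := Multiset.single_le_sum (fun y _ => Nat.zero_le y) x hxF
    have hfit1 : vol T + x ≤ κ := by omega
    have hleg1 : Legal κ (B ::ₘ T ::ₘ D0) := by
      intro Bb hBb; apply hleg; rw [Multiset.cons_swap]; exact hBb
    have hstep : Step κ (B ::ₘ T ::ₘ D0) (B.erase x ::ₘ (x ::ₘ T) ::ₘ D0) :=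
      step_move hxB hfit1 hleg1
    -- recurse
    have hsum_erase : x + (F.erase x).sum = F.sum := by
      have : (x ::ₘ F.erase x).sum = F.sum := by rw [Multiset.cons_erase hxF]
      simpa [Multiset.sum_cons] using this
    have hFle' : F.erase x ≤ ((B.erase x) ::ₘ D0).sum := by
      have h1 : F.erase x ≤ (B ::ₘ D0).sum.erase x := Multiset.erase_le_erase x hFle
      have h2 : ((B ::ₘ D0).sum).erase x = B.erase x + D0.sum := by
        rw [Multiset.sum_cons, Multiset.erase_add_left_pos _ hxB]
      rw [Multiset.sum_cons]
      rw [h2] at h1; exact h1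
    have hfit' : vol (x ::ₘ T) + (F.erase x).sum ≤ κ := by
      have : vol (x ::ₘ T) = x + vol T := by simp [vol, Multiset.sum_cons]
      omega
    have hleg' : Legal κ ((x ::ₘ T) ::ₘ (B.erase x) ::ₘ D0) := by
      intro Bb hBb
      apply hstep.2.1
      rw [Multiset.cons_swap]; exact hBb
    have hcard' : Multiset.card (F.erase x) = n := by
      rw [Multiset.card_erase_of_mem hxF, hcard]; rfl
    obtain ⟨D', hrec, hsum', hcard'', hlegD'⟩ := ih (F.erase x) (x ::ₘ T) ((B.erase x) ::ₘ D0)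
      hcard' hleg' hFle' hfit'
    refine ⟨D', ?_, ?_, ?_, hlegD'⟩
    · -- chain
      have e1 : (T ::ₘ B ::ₘ D0) = (B ::ₘ T ::ₘ D0) := Multiset.cons_swap _ _ _
      have e2 : (B.erase x ::ₘ (x ::ₘ T) ::ₘ D0) = ((x ::ₘ T) ::ₘ (B.erase x) ::ₘ D0) :=
        Multiset.cons_swap _ _ _
      have hTF : (x ::ₘ T) + F.erase x = T + F := by
        rw [Multiset.cons_add, ← Multiset.add_cons, Multiset.cons_erase hxF]
      rw [e1]
      refine Relation.ReflTransGen.head hstep ?_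
      rw [e2]
      rw [hTF] at hrec
      exact hrec
    · rw [hsum']
      have : ((B.erase x) ::ₘ D0).sum = ((B ::ₘ D0).sum).erase x := by
        rw [Multiset.sum_cons, Multiset.sum_cons, Multiset.erase_add_left_pos _ hxB]
      rw [this]
      have hx2 : ((B ::ₘ D0).sum).erase x = (B ::ₘ D0).sum - {x} := by
        rw [Multiset.sub_singleton]
      rw [hx2, tsub_tsub, Multiset.singleton_add, Multiset.cons_erase hxF]
    · rw [hcard'']; simp

section Core
variable {κ α : ℕ}

def light (α κ : ℕ) (B : Bunch) : Prop := (α+1) * vol B + 1 ≤ α * κ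

instance : DecidablePred (light α κ) := fun B => by unfold light; infer_instance

lemma sum_bound (α κ : ℕ) : ∀ (C : Config), (∀ B ∈ C, 1 ≤ vol B) →
    α*κ*(Multiset.card C) + (α+1)*(Multiset.card (C.filter (light α κ))) ≤
      (α+1)*(C.sum).sum + α*κ*(Multiset.card (C.filter (light α κ))) := by
  intro C
  induction C using Multiset.induction_on with
  | empty => simp
  | cons B t ih =>
    intro hv
    have ihh := ih (fun B hB => hv B (Multiset.mem_cons_of_mem hB))
    have hB1 : 1 ≤ vol B := hv B (Multiset.mem_cons_self _ _)
    have hsum : ((B ::ₘ t).sum).sum = vol B + (t.sum).sum := by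
      simp [Multiset.sum_cons, vol]
    have e1 : α + 1 ≤ (α+1) * vol B := by
      have := Nat.mul_le_mul_left (α+1) hB1
      simpa using this
    by_cases hl : light α κ B
    · have hfc : (B ::ₘ t).filter (light α κ) = B ::ₘ (t.filter (light α κ)) :=
        Multiset.filter_cons_of_pos _ hl
      have hlB : (α+1) * vol B + 1 ≤ α * κ := hl
      rw [hfc, hsum, Multiset.card_cons, Multiset.card_cons]
      have d1 : α*κ*(Multiset.card t + 1) = α*κ*(Multiset.card t) + α*κ := by ring
      have d2 : (α+1)*(Multiset.card (t.filter (light α κ)) + 1)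
          = (α+1)*(Multiset.card (t.filter (light α κ))) + (α+1) := by ring
      have d3 : (α+1)*(vol B + (t.sum).sum) = (α+1)*vol B + (α+1)*(t.sum).sum := by ring
      have d4 : α*κ*(Multiset.card (t.filter (light α κ)) + 1)
          = α*κ*(Multiset.card (t.filter (light α κ))) + α*κ := by ring
      rw [d1, d2, d3, d4]
      omega
    · have hfc : (B ::ₘ t).filter (light α κ) = t.filter (light α κ) :=
        Multiset.filter_cons_of_neg _ hl
      have hlB' : α * κ ≤ (α+1) * vol B := by
        have h2 : ¬ ((α+1) * vol B + 1 ≤ α * κ) := hl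
        omega
      rw [hfc, hsum, Multiset.card_cons]
      have d1 : α*κ*(Multiset.card t + 1) = α*κ*(Multiset.card t) + α*κ := by ring
      have d3 : (α+1)*(vol B + (t.sum).sum) = (α+1)*vol B + (α+1)*(t.sum).sum := by ring
      rw [d1, d3]
      omega

lemma claimX (hκ : 0 < κ) (hα : 2 ≤ α) (C : Config) (hleg : Legal κ C)
    (hvol1 : ∀ B ∈ C, 1 ≤ vol B)
    (hpos : ∀ x ∈ C.sum, 0 < x)
    (hsmall : ∀ x ∈ C.sum, α * x ≤ κ)
    (budget : (α+1) * (C.sum).sum + 3*(α*κ) ≤ α*κ*(Multiset.card C))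
    (hstuck : ∀ (A R : Bunch) (rest : Config) (z : ℕ),
      C = A ::ₘ R ::ₘ rest → z ∈ A → vol R + z ≤ κ → vol R + z ≤ vol A) :
    False := by
  -- step 1 : at most 2 light bins
  have hlight2 : Multiset.card (C.filter (light α κ)) ≤ 2 := by
    by_contra h3
    push_neg at h3
    set Lmul := C.filter (light α κ) with hLmul
    have hL0 : Lmul ≠ 0 := by
      intro h; rw [h] at h3; simp at h3
    obtain ⟨L1, hL1mem, hL1max⟩ := exists_max_image Lmul vol hL0
    have hcard1 : 2 ≤ Multiset.card (Lmul.erase L1) := by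
      rw [Multiset.card_erase_of_mem hL1mem, Nat.pred_eq_sub_one]; omega
    have hr1 : Lmul.erase L1 ≠ 0 := by
      intro h; rw [h] at hcard1; simp at hcard1
    obtain ⟨L2, hL2r⟩ := Multiset.exists_mem_of_ne_zero hr1
    have hcard2 : 1 ≤ Multiset.card ((Lmul.erase L1).erase L2) := by
      rw [Multiset.card_erase_of_mem hL2r, Nat.pred_eq_sub_one]; omega
    have hr2 : (Lmul.erase L1).erase L2 ≠ 0 := by
      intro h; rw [h] at hcard2; simp at hcard2
    obtain ⟨L3, hL3r⟩ := Multiset.exists_mem_of_ne_zero hr2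
    have hL2mem : L2 ∈ Lmul := Multiset.mem_of_mem_erase hL2r
    have hL3mem : L3 ∈ Lmul := Multiset.mem_of_mem_erase (Multiset.mem_of_mem_erase hL3r)
    -- extract the three as a submultiset
    have hsub : (L1 ::ₘ L2 ::ₘ {L3}) ≤ C := by
      have h1 : ({L3} : Config) ≤ (Lmul.erase L1).erase L2 := Multiset.singleton_le.mpr hL3r
      have h2 : (L2 ::ₘ {L3}) ≤ Lmul.erase L1 := by
        calc L2 ::ₘ {L3} ≤ L2 ::ₘ ((Lmul.erase L1).erase L2) := Multiset.cons_le_cons _ h1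
        _ = Lmul.erase L1 := Multiset.cons_erase hL2r
      have h3' : (L1 ::ₘ L2 ::ₘ {L3}) ≤ Lmul := by
        calc L1 ::ₘ L2 ::ₘ {L3} ≤ L1 ::ₘ (Lmul.erase L1) := Multiset.cons_le_cons _ h2
        _ = Lmul := Multiset.cons_erase hL1mem
      exact le_trans h3' (Multiset.filter_le _ C)
    obtain ⟨restC, hC⟩ := Multiset.le_iff_exists_add.mp hsub
    have hCeq : C = L1 ::ₘ L2 ::ₘ L3 ::ₘ restC := by
      rw [hC]; simp [Multiset.cons_add, Multiset.singleton_add]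
    have light1 : (α+1) * vol L1 + 1 ≤ α * κ := (Multiset.mem_filter.mp hL1mem).2
    have light2 : (α+1) * vol L2 + 1 ≤ α * κ := (Multiset.mem_filter.mp hL2mem).2
    have light3 : (α+1) * vol L3 + 1 ≤ α * κ := (Multiset.mem_filter.mp hL3mem).2
    have hv21 : vol L2 ≤ vol L1 := hL1max L2 hL2mem
    have hv31 : vol L3 ≤ vol L1 := hL1max L3 hL3mem
    have hL2C : L2 ∈ C := (Multiset.mem_filter.mp hL2mem).1
    have hL3C : L3 ∈ C := (Multiset.mem_filter.mp hL3mem).1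
    -- items of L2 resp L3 do not fit into L1
    have hbig : ∀ (Lj Lo : Bunch), C = Lj ::ₘ L1 ::ₘ Lo ::ₘ restC → vol Lj ≤ vol L1 →
        ∀ z ∈ Lj, κ + 1 ≤ vol L1 + z := by
      intro Lj Lo hCe hvle z hz
      by_contra hfit
      push_neg at hfit
      have hzpos : 0 < z := by
        apply hpos
        apply Multiset.mem_of_le (mem_le_sum (show Lj ∈ C by rw [hCe]; exact Multiset.mem_cons_self _ _))
        exact hz
      have := hstuck Lj L1 (Lo ::ₘ restC) z hCe hz (by omega)
      omega
    have hCe2 : C = L2 ::ₘ L1 ::ₘ L3 ::ₘ restC := by rw [hCeq, Multiset.cons_swap]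
    have hCe3 : C = L3 ::ₘ L1 ::ₘ L2 ::ₘ restC := by
      rw [hCeq, Multiset.cons_swap L2 L3, Multiset.cons_swap L1 L3]
    have hbig2 := hbig L2 L3 hCe2 hv21
    have hbig3 := hbig L3 L2 hCe3 hv31
    -- card bounds
    have hcardb : ∀ (Lj : Bunch), Lj ∈ C → (α+1) * vol Lj + 1 ≤ α*κ →
        (∀ z ∈ Lj, κ + 1 ≤ vol L1 + z) → Multiset.card Lj + 1 ≤ α := by
      intro Lj hLjC lightj hbigj
      by_contra hcc
      push_neg at hcc
      have hc : α ≤ Multiset.card Lj := by omega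
      -- sum over items
      have e1 : Multiset.card Lj * (κ+1) ≤ Multiset.card Lj * vol L1 + vol Lj := by
        have h1 : ((Lj.map (fun _ => κ+1)).sum : ℕ) ≤ (Lj.map (fun z => vol L1 + z)).sum :=
          Multiset.sum_map_le_sum_map _ _ (fun z hz => hbigj z hz)
        have h2 : ((Lj.map (fun _ => κ+1)).sum : ℕ) = Multiset.card Lj * (κ+1) := by
          simp [Multiset.map_const', Multiset.sum_replicate]
        have h3 : ((Lj.map (fun z => vol L1 + z)).sum : ℕ) = Multiset.card Lj * vol L1 + vol Lj := by
          rw [Multiset.sum_map_add]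
          simp [Multiset.map_const', Multiset.sum_replicate, vol, Multiset.map_id']
        omega
      set c := Multiset.card Lj
      have m1 : c * ((α+1)*vol L1 + 1) ≤ c * (α*κ) := Nat.mul_le_mul_left c light1
      have m2 : (α+1) * (c*(κ+1)) ≤ (α+1) * (c*vol L1 + vol Lj) := Nat.mul_le_mul_left _ e1
      have m3 : α * κ ≤ c * κ := Nat.mul_le_mul_right κ hc
      nlinarith [lightj, m1, m2, m3, hκ, hα]
    have hcard2' := hcardb L2 hL2C light2 hbig2
    have hcard3' := hcardb L3 hL3C light3 hbig3
    -- volume bounds : α * vol Lj + κ ≤ α * κ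
    have hvolb : ∀ (Lj : Bunch), Lj ∈ C → Multiset.card Lj + 1 ≤ α → α * vol Lj + κ ≤ α * κ := by
      intro Lj hLjC hcj
      have h1 : (Lj.map (fun z => α * z)).sum ≤ (Lj.map (fun _ => κ)).sum := by
        apply Multiset.sum_map_le_sum_map
        intro z hz
        exact hsmall z (Multiset.mem_of_le (mem_le_sum hLjC) hz)
      have h2 : (Lj.map (fun z => α * z)).sum = α * vol Lj := by
        rw [Multiset.sum_map_mul_left]; simp [vol, Multiset.map_id']
      have h3 : (Lj.map (fun _ => κ)).sum = Multiset.card Lj * κ := by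
        simp [Multiset.map_const', Multiset.sum_replicate]
      have h4 : Multiset.card Lj * κ + κ ≤ α * κ := by
        have h5 : (Multiset.card Lj + 1) * κ ≤ α * κ := Nat.mul_le_mul_right κ hcj
        have h6 : (Multiset.card Lj + 1) * κ = Multiset.card Lj * κ + κ := by ring
        omega
      omega
    have hvol2 := hvolb L2 hL2C hcard2'
    have hvol3 := hvolb L3 hL3C hcard3'
    -- pick items
    have hL2ne : L2 ≠ 0 := by
      intro h
      have := hvol1 L2 hL2C
      rw [h] at this; simp [vol] at this
    have hL3ne : L3 ≠ 0 := by
      intro h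
      have := hvol1 L3 hL3C
      rw [h] at this; simp [vol] at this
    obtain ⟨z2, hz2⟩ := Multiset.exists_mem_of_ne_zero hL2ne
    obtain ⟨z3, hz3⟩ := Multiset.exists_mem_of_ne_zero hL3ne
    have hz2small : α * z2 ≤ κ := hsmall z2 (Multiset.mem_of_le (mem_le_sum hL2C) hz2)
    have hz3small : α * z3 ≤ κ := hsmall z3 (Multiset.mem_of_le (mem_le_sum hL3C) hz3)
    have hz2pos : 0 < z2 := hpos z2 (Multiset.mem_of_le (mem_le_sum hL2C) hz2)
    have hz3pos : 0 < z3 := hpos z3 (Multiset.mem_of_le (mem_le_sum hL3C) hz3)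
    have hfit23 : vol L3 + z2 ≤ κ := by
      have : α * (vol L3 + z2) ≤ α * κ := by
        rw [Nat.mul_add]; omega
      exact Nat.le_of_mul_le_mul_left this (by omega)
    have hfit32 : vol L2 + z3 ≤ κ := by
      have : α * (vol L2 + z3) ≤ α * κ := by
        rw [Nat.mul_add]; omega
      exact Nat.le_of_mul_le_mul_left this (by omega)
    have hCe23 : C = L2 ::ₘ L3 ::ₘ L1 ::ₘ restC := by
      rw [hCeq, Multiset.cons_swap L1 L2, Multiset.cons_swap L1 L3]
    have hCe32 : C = L3 ::ₘ L2 ::ₘ L1 ::ₘ restC := by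
      rw [hCe23, Multiset.cons_swap]
    have g2 := hstuck L2 L3 (L1 ::ₘ restC) z2 hCe23 hz2 hfit23
    have g3 := hstuck L3 L2 (L1 ::ₘ restC) z3 hCe32 hz3 hfit32
    omega
  -- step 2 : slack counting contradiction
  have hsb := sum_bound α κ C hvol1
  have hXpos : 0 < α * κ := by positivity
  have hc2 : α*κ*(Multiset.card (C.filter (light α κ))) ≤ α*κ*2 :=
    Nat.mul_le_mul_left (α*κ) hlight2
  omega
end Core

def phi2 (C : Config) : ℕ := (C.map (fun B => vol B * vol B)).sum

lemma phi2_le {κ : ℕ} (C : Config) (hleg : Legal κ C) : phi2 C ≤ Multiset.card C * (κ*κ) := by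
  induction C using Multiset.induction_on with
  | empty => simp [phi2]
  | cons B t ih =>
    have hB : vol B ≤ κ := hleg B (Multiset.mem_cons_self _ _)
    have iht := ih (fun B hB => hleg B (Multiset.mem_cons_of_mem hB))
    have h1 : vol B * vol B ≤ κ * κ := Nat.mul_le_mul hB hB
    have h2 : phi2 (B ::ₘ t) = vol B * vol B + phi2 t := by simp [phi2]
    have h3 : Multiset.card (B ::ₘ t) * (κ*κ) = Multiset.card t * (κ*κ) + κ*κ := by
      rw [Multiset.card_cons]; ring
    omega

lemma make_empty {κ α : ℕ} (hκ : 0 < κ) (hα : 2 ≤ α) :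
    ∀ (n : ℕ) (C : Config),
    Multiset.card C * (κ*κ) ≤ phi2 C + n →
    Legal κ C → (∀ x ∈ C.sum, 0 < x) → (∀ x ∈ C.sum, α*x ≤ κ) →
    (α+1) * (C.sum).sum + 3*(α*κ) ≤ α*κ*(Multiset.card C) →
    ∃ C', Reconfigurable κ C C' ∧ C'.sum = C.sum ∧
      Multiset.card C' = Multiset.card C ∧ Legal κ C' ∧ (0:Bunch) ∈ C' := by
  intro n
  induction n with
  | zero =>
    intro C hm hleg hpos hsmall hb
    by_cases hE : (0:Bunch) ∈ C
    · exact ⟨C, Relation.ReflTransGen.refl, rfl, rfl, hleg, hE⟩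
    exfalso
    have hvol1 : ∀ B ∈ C, 1 ≤ vol B := by
      intro B hB
      rcases eq_or_ne B 0 with rfl | hne
      · exact absurd hB hE
      obtain ⟨x, hx⟩ := Multiset.exists_mem_of_ne_zero hne
      have hx1 : 0 < x := hpos x (Multiset.mem_of_le (mem_le_sum hB) hx)
      have : x ≤ vol B := Multiset.single_le_sum (fun y _ => Nat.zero_le y) x hx
      omega
    have hmove : ¬ (∀ (A R : Bunch) (rest : Config) (z : ℕ),
        C = A ::ₘ R ::ₘ rest → z ∈ A → vol R + z ≤ κ → vol R + z ≤ vol A) :=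
      fun hstuck => claimX hκ hα C hleg hvol1 hpos hsmall hb hstuck
    push_neg at hmove
    obtain ⟨A, R, rest, z, hCeq, hzA, hfit, hup⟩ := hmove
    have hstep : Step κ (A ::ₘ R ::ₘ rest) (A.erase z ::ₘ (z ::ₘ R) ::ₘ rest) :=
      step_move hzA hfit (hCeq ▸ hleg)
    -- φ₂ strictly increases
    have hz1 : 1 ≤ z := by
      apply hpos
      exact Multiset.mem_of_le (mem_le_sum (show A ∈ C by rw [hCeq]; exact Multiset.mem_cons_self _ _)) hzA
    have ha : vol (A.erase z) + z = vol A := vol_erase_add hzA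
    have har : vol (A.erase z) + 1 ≤ vol R := by omega
    have hinc : phi2 C + 1 ≤ phi2 (A.erase z ::ₘ (z ::ₘ R) ::ₘ rest) := by
      have h1 : phi2 C = vol A*vol A + (vol R*vol R + phi2 rest) := by
        rw [hCeq]; simp [phi2]
      have h2 : phi2 (A.erase z ::ₘ (z ::ₘ R) ::ₘ rest)
          = vol (A.erase z)*vol (A.erase z) + (vol (z ::ₘ R)*vol (z ::ₘ R) + phi2 rest) := by
        simp [phi2]
      have h3 : vol (z ::ₘ R) = z + vol R := by simp [vol]
      set a := vol (A.erase z)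
      set r := vol R
      have e1 : vol A * vol A = a*a + 2*(a*z) + z*z := by rw [← ha]; ring
      have e2 : (z + r)*(z + r) = z*z + 2*(r*z) + r*r := by ring
      have key : 2*(a*z) + 2*z ≤ 2*(r*z) := by
        have h7 : (a+1)*z ≤ r*z := Nat.mul_le_mul_right z har
        have h8 : (a+1)*z = a*z + z := by ring
        omega
      rw [h1, h2, h3, e1, e2]
      omega
    -- contradiction with maximality of φ₂
    have hleg' : Legal κ (A.erase z ::ₘ (z ::ₘ R) ::ₘ rest) := hstep.2.1
    have hphile := phi2_le _ hleg'
    obtain ⟨hsum', hcard'⟩ := step_sum_card hstep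
    rw [← hCeq] at hsum'
    have hcard'' : Multiset.card (A.erase z ::ₘ (z ::ₘ R) ::ₘ rest) = Multiset.card C := by
      rw [hCeq]; simp
    rw [hcard''] at hphile
    omega
  | succ n ih =>
    intro C hm hleg hpos hsmall hb
    by_cases hE : (0:Bunch) ∈ C
    · exact ⟨C, Relation.ReflTransGen.refl, rfl, rfl, hleg, hE⟩
    have hvol1 : ∀ B ∈ C, 1 ≤ vol B := by
      intro B hB
      rcases eq_or_ne B 0 with rfl | hne
      · exact absurd hB hE
      obtain ⟨x, hx⟩ := Multiset.exists_mem_of_ne_zero hne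
      have hx1 : 0 < x := hpos x (Multiset.mem_of_le (mem_le_sum hB) hx)
      have : x ≤ vol B := Multiset.single_le_sum (fun y _ => Nat.zero_le y) x hx
      omega
    have hmove : ¬ (∀ (A R : Bunch) (rest : Config) (z : ℕ),
        C = A ::ₘ R ::ₘ rest → z ∈ A → vol R + z ≤ κ → vol R + z ≤ vol A) :=
      fun hstuck => claimX hκ hα C hleg hvol1 hpos hsmall hb hstuck
    push_neg at hmove
    obtain ⟨A, R, rest, z, hCeq, hzA, hfit, hup⟩ := hmove
    have hstep : Step κ (A ::ₘ R ::ₘ rest) (A.erase z ::ₘ (z ::ₘ R) ::ₘ rest) :=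
      step_move hzA hfit (hCeq ▸ hleg)
    have hz1 : 1 ≤ z := by
      apply hpos
      exact Multiset.mem_of_le (mem_le_sum (show A ∈ C by rw [hCeq]; exact Multiset.mem_cons_self _ _)) hzA
    have ha : vol (A.erase z) + z = vol A := vol_erase_add hzA
    have har : vol (A.erase z) + 1 ≤ vol R := by omega
    set C2 := A.erase z ::ₘ (z ::ₘ R) ::ₘ rest with hC2
    have hinc : phi2 C + 1 ≤ phi2 C2 := by
      have h1 : phi2 C = vol A*vol A + (vol R*vol R + phi2 rest) := by
        rw [hCeq]; simp [phi2]
      have h2 : phi2 C2 = vol (A.erase z)*vol (A.erase z) + (vol (z ::ₘ R)*vol (z ::ₘ R) + phi2 rest) := by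
        simp [hC2, phi2]
      have h3 : vol (z ::ₘ R) = z + vol R := by simp [vol]
      set a := vol (A.erase z)
      set r := vol R
      have e1 : vol A * vol A = a*a + 2*(a*z) + z*z := by rw [← ha]; ring
      have e2 : (z + r)*(z + r) = z*z + 2*(r*z) + r*r := by ring
      have key : 2*(a*z) + 2*z ≤ 2*(r*z) := by
        have h7 : (a+1)*z ≤ r*z := Nat.mul_le_mul_right z har
        have h8 : (a+1)*z = a*z + z := by ring
        omega
      rw [h1, h2, h3, e1, e2]
      omega
    obtain ⟨hsum2, hcard2⟩ := step_sum_card hstep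
    rw [← hCeq] at hsum2
    have hcard2' : Multiset.card C2 = Multiset.card C := by
      rw [hC2, hCeq]; simp
    have hleg2 : Legal κ C2 := hstep.2.1
    have hm2 : Multiset.card C2 * (κ*κ) ≤ phi2 C2 + n := by
      rw [hcard2']; omega
    have hpos2 : ∀ x ∈ C2.sum, 0 < x := by rw [hsum2]; exact hpos
    have hsmall2 : ∀ x ∈ C2.sum, α*x ≤ κ := by rw [hsum2]; exact hsmall
    have hb2 : (α+1) * (C2.sum).sum + 3*(α*κ) ≤ α*κ*(Multiset.card C2) := by
      rw [hsum2, hcard2']; exact hb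
    obtain ⟨C', hrec, hs', hc', hl', h0'⟩ := ih C2 hm2 hleg2 hpos2 hsmall2 hb2
    refine ⟨C', ?_, ?_, ?_, hl', h0'⟩
    · rw [hCeq]
      exact Relation.ReflTransGen.head hstep hrec
    · rw [hs', hsum2]
    · rw [hc', hcard2']

lemma exists_heavy {κ α : ℕ} (hκ : 0 < κ) (hα : 2 ≤ α) :
    ∀ (n : ℕ) (I : Multiset ℕ), Multiset.card I = n →
    (∀ x ∈ I, 0 < x) → (∀ x ∈ I, α*x ≤ κ) → α*κ ≤ (α+1)*I.sum →
    ∃ F, F ≤ I ∧ α*κ ≤ (α+1)*F.sum ∧ F.sum ≤ κ := by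
  intro n
  induction n with
  | zero =>
    intro I hcard _ _ hV
    have : I = 0 := Multiset.card_eq_zero.mp hcard
    subst this
    simp at hV
    have : 0 < α*κ := Nat.mul_pos (by omega) hκ
    omega
  | succ n ih =>
    intro I hcard hpos hsmall hV
    have hI0 : I ≠ 0 := by intro h; subst h; simp at hcard
    obtain ⟨w, hw, hwmin⟩ := exists_min_mem I hI0
    have hsum : I.sum = w + (I.erase w).sum := by
      conv_lhs => rw [← Multiset.cons_erase hw]
      rw [Multiset.sum_cons]
    by_cases hc : α*κ ≤ (α+1)*(I.erase w).sum
    · obtain ⟨F, hF1, hF2, hF3⟩ := ih (I.erase w)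
        (by rw [Multiset.card_erase_of_mem hw, hcard, Nat.pred_eq_sub_one]; omega)
        (fun x hx => hpos x (Multiset.mem_of_mem_erase hx))
        (fun x hx => hsmall x (Multiset.mem_of_mem_erase hx)) hc
      exact ⟨F, le_trans hF1 (Multiset.erase_le _ _), hF2, hF3⟩
    · push_neg at hc
      refine ⟨I, le_rfl, hV, ?_⟩
      by_cases hwκ : (α+1)*w ≤ κ
      · -- small minimum : total < κ
        have e1 : (α+1)*I.sum = (α+1)*w + (α+1)*(I.erase w).sum := by
          rw [hsum]; ring
        have e2 : (α+1)*I.sum < (α+1)*κ := by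
          have e3 : α*κ + κ = (α+1)*κ := by ring
          omega
        have := Nat.lt_of_mul_lt_mul_left e2
        omega
      · -- all items large : at most α of them
        push_neg at hwκ
        have hcle : Multiset.card I ≤ α := by
          by_contra hgt
          push_neg at hgt
          have hce : α ≤ Multiset.card (I.erase w) := by
            rw [Multiset.card_erase_of_mem hw, Nat.pred_eq_sub_one]; omega
          have h1 : Multiset.card (I.erase w) • w ≤ (I.erase w).sum :=
            Multiset.card_nsmul_le_sum (fun x hx => hwmin x (Multiset.mem_of_mem_erase hx))
          have h1' : Multiset.card (I.erase w) * w ≤ (I.erase w).sum := by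
            simpa [smul_eq_mul] using h1
          have h2 : α * w ≤ Multiset.card (I.erase w) * w := Nat.mul_le_mul_right w hce
          have h3 : (α+1)*(α*w) ≤ (α+1)*((I.erase w).sum) := by
            apply Nat.mul_le_mul_left
            omega
          have h4 : α*((α+1)*w) = (α+1)*(α*w) := by ring
          have h5 : α*κ + α ≤ α*((α+1)*w) := by
            have : κ + 1 ≤ (α+1)*w := hwκ
            have := Nat.mul_le_mul_left α this
            have e : α*(κ+1) = α*κ + α := by ring
            omega
          omega
        have h6 : α * I.sum ≤ Multiset.card I * κ := by
          have h7 : (I.map (fun z => α * z)).sum ≤ (I.map (fun _ => κ)).sum :=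
            Multiset.sum_map_le_sum_map _ _ (fun z hz => hsmall z hz)
          have h8 : (I.map (fun z => α * z)).sum = α * I.sum := by
            rw [Multiset.sum_map_mul_left]; simp [Multiset.map_id']
          have h9 : (I.map (fun _ => κ)).sum = Multiset.card I * κ := by
            simp [Multiset.map_const', Multiset.sum_replicate]
          omega
        have h10 : Multiset.card I * κ ≤ α * κ := Nat.mul_le_mul_right κ hcle
        have h11 : α * I.sum ≤ α * κ := le_trans h6 h10
        exact Nat.le_of_mul_le_mul_left h11 (by omega)

lemma consolidate {κ : ℕ} {C : Config} (hC : Legal κ C) (hne : C ≠ 0)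
    (hV : (C.sum).sum ≤ κ) :
    Reconfigurable κ C ((C.sum) ::ₘ Multiset.replicate (Multiset.card C - 1) (0:Bunch)) := by
  obtain ⟨T, hT⟩ := Multiset.exists_mem_of_ne_zero hne
  obtain ⟨D, rfl⟩ := Multiset.exists_cons_of_mem hT
  have hfit : vol T + (D.sum).sum ≤ κ := by
    have : ((T ::ₘ D).sum).sum = vol T + (D.sum).sum := by
      simp [Multiset.sum_cons, vol]
    omega
  obtain ⟨D', hrec, hsum', hcard', hleg'⟩ := gather (Multiset.card (D.sum)) (D.sum) T D rfl hC le_rfl hfit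
  have hD'0 : D'.sum = 0 := by rw [hsum']; simp
  have hall : ∀ B ∈ D', B = (0:Bunch) := by
    intro B hB
    have h1 : B ≤ D'.sum := mem_le_sum hB
    rw [hD'0] at h1
    exact Multiset.le_zero.mp h1
  have hrepl : D' = Multiset.replicate (Multiset.card D') (0:Bunch) :=
    Multiset.eq_replicate_card.mpr hall
  have hcc : Multiset.card D' = Multiset.card (T ::ₘ D) - 1 := by
    rw [hcard']; simp
  have hsum2 : (T ::ₘ D).sum = T + D.sum := Multiset.sum_cons T D
  rw [hsum2]
  rw [← hcc, ← hrepl]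
  exact hrec

lemma slack_total (κ : ℕ) : ∀ (C : Config), Legal κ C →
    slackSum κ C + (C.sum).sum = Multiset.card C * κ := by
  intro C
  induction C using Multiset.induction_on with
  | empty => simp [slackSum]
  | cons B t ih =>
    intro hleg
    have hB : vol B ≤ κ := hleg B (Multiset.mem_cons_self _ _)
    have iht := ih (fun B hB => hleg B (Multiset.mem_cons_of_mem hB))
    have h1 : slackSum κ (B ::ₘ t) = (κ - vol B) + slackSum κ t := by
      simp [slackSum]
    have h2 : ((B ::ₘ t).sum).sum = vol B + (t.sum).sum := by
      simp [Multiset.sum_cons, vol]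
    have h3 : Multiset.card (B ::ₘ t) * κ = Multiset.card t * κ + κ := by
      rw [Multiset.card_cons]; ring
    omega

lemma ML {κ α : ℕ} (hκ : 0 < κ) (hα : 2 ≤ α) :
    ∀ (N : ℕ) (CS CT : Config),
    Legal κ CS → Legal κ CT → Multiset.card CS = N → Multiset.card CT = N →
    CS.sum = CT.sum → (∀ x ∈ CS.sum, 0 < x) → (∀ x ∈ CS.sum, α*x ≤ κ) →
    (α+1)*(CS.sum).sum + 3*(α*κ) ≤ α*κ*N → Reconfigurable κ CS CT := by
  intro N
  induction N using Nat.strong_induction_on with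
  | _ N ih =>
  intro CS CT hS hT hcS hcT hU hpos hsmall hbudget
  by_cases hV : α*κ ≤ (α+1)*(CS.sum).sum
  · -- big volume : extract a heavy bunch F
    obtain ⟨F, hFle, hFheavy, hFκ⟩ :=
      exists_heavy hκ hα (Multiset.card CS.sum) CS.sum rfl hpos hsmall hV
    have hNpos : 1 ≤ N := by
      rcases Nat.eq_zero_or_pos N with rfl | h
      · exfalso
        have h0 : 0 < α*κ := Nat.mul_pos (by omega) hκ
        simp at hbudget
        omega
      · exact h
    -- reach F ::ₘ D from any config with the same data
    have key : ∀ C : Config, Legal κ C → Multiset.card C = N → C.sum = CS.sum →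
        ∃ D, Reconfigurable κ C (F ::ₘ D) ∧ D.sum = CS.sum - F ∧
          Multiset.card D = N - 1 ∧ Legal κ D := by
      intro C hCleg hCcard hCsum
      have hCpos : ∀ x ∈ C.sum, 0 < x := by rw [hCsum]; exact hpos
      have hCsmall : ∀ x ∈ C.sum, α*x ≤ κ := by rw [hCsum]; exact hsmall
      have hCb : (α+1)*(C.sum).sum + 3*(α*κ) ≤ α*κ*(Multiset.card C) := by
        rw [hCsum, hCcard]; exact hbudget
      obtain ⟨C1, hrec1, hsum1, hcard1, hleg1, h01⟩ :=
        make_empty hκ hα (Multiset.card C * (κ*κ)) C (Nat.le_add_left _ _)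
          hCleg hCpos hCsmall hCb
      obtain ⟨D1, hD1⟩ := Multiset.exists_cons_of_mem h01
      have hlegT : Legal κ ((0:Bunch) ::ₘ D1) := by rw [← hD1]; exact hleg1
      have hD1sum : D1.sum = CS.sum := by
        have : C1.sum = (0:Bunch) + D1.sum := by rw [hD1, Multiset.sum_cons]
        rw [zero_add] at this
        rw [← this, hsum1, hCsum]
      have hFD : F ≤ D1.sum := by rw [hD1sum]; exact hFle
      have hfit : vol (0:Bunch) + F.sum ≤ κ := by simpa [vol] using hFκ
      obtain ⟨D, hrec2, hDsum, hDcard, hDleg⟩ :=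
        gather (Multiset.card F) F 0 D1 rfl hlegT hFD hfit
      refine ⟨D, ?_, ?_, ?_, hDleg⟩
      · refine hrec1.trans ?_
        rw [hD1]
        simpa [Reconfigurable] using hrec2
      · rw [hDsum, hD1sum]
      · have hcd1 : Multiset.card C1 = Multiset.card D1 + 1 := by rw [hD1]; simp
        rw [hDcard]
        omega
    obtain ⟨DS, hrecS, hDSsum, hDScard, hDSleg⟩ := key CS hS hcS rfl
    obtain ⟨DT, hrecT, hDTsum, hDTcard, hDTleg⟩ := key CT hT hcT hU.symm
    -- budget for the recursion
    have hsplit : (CS.sum - F) + F = CS.sum := tsub_add_cancel_of_le hFle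
    have hsum_split : (CS.sum - F).sum + F.sum = (CS.sum).sum := by
      conv_rhs => rw [← hsplit]
      rw [Multiset.sum_add]
    have hb' : (α+1)*((CS.sum - F).sum) + 3*(α*κ) ≤ α*κ*(N-1) := by
      have e1 : (α+1)*((CS.sum - F).sum) + (α+1)*F.sum = (α+1)*(CS.sum).sum := by
        rw [← Nat.mul_add, hsum_split]
      have e2 : α*κ*(N-1) + α*κ = α*κ*N := by
        rw [← Nat.mul_succ]
        congr 1
        omega
      omega
    have hposD : ∀ x ∈ DS.sum, 0 < x := by
      rw [hDSsum]
      intro x hx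
      exact hpos x (Multiset.mem_of_le (tsub_le_self (a := CS.sum) (b := F)) hx)
    have hsmallD : ∀ x ∈ DS.sum, α*x ≤ κ := by
      rw [hDSsum]
      intro x hx
      exact hsmall x (Multiset.mem_of_le (tsub_le_self (a := CS.sum) (b := F)) hx)
    have hDSsum' : (DS.sum).sum = (CS.sum - F).sum := by rw [hDSsum]
    have hrecmid : Reconfigurable κ DS DT := by
      apply ih (N-1) (by omega) DS DT hDSleg hDTleg hDScard hDTcard
        (by rw [hDSsum, hDTsum]) hposD hsmallD
      rw [hDSsum']
      exact hb'
    have hFvol : vol F ≤ κ := hFκ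
    exact hrecS.trans ((reconf_frame F hFvol hrecmid).trans (reconf_symm hrecT))
  · -- small volume : consolidate into a single bunch
    push_neg at hV
    have hVκ : (CS.sum).sum ≤ κ := by
      have e3 : α*κ + κ = (α+1)*κ := by ring
      have e2 : (α+1)*(CS.sum).sum < (α+1)*κ := by omega
      have := Nat.lt_of_mul_lt_mul_left e2
      omega
    rcases Nat.eq_zero_or_pos N with rfl | hN
    · have h1 : CS = 0 := Multiset.card_eq_zero.mp hcS
      have h2 : CT = 0 := Multiset.card_eq_zero.mp hcT
      rw [h1, h2]
      exact Relation.ReflTransGen.refl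
    · have hSne : CS ≠ 0 := by
        intro h; rw [h] at hcS; simp at hcS; omega
      have hTne : CT ≠ 0 := by
        intro h; rw [h] at hcT; simp at hcT; omega
      have hcons1 := consolidate hS hSne hVκ
      have hcons2 := consolidate hT hTne (by rw [← hU]; exact hVκ)
      rw [hcS] at hcons1
      rw [hcT, ← hU] at hcons2
      exact hcons1.trans (reconf_symm hcons2)


theorem stmt4 (κ α N : ℕ) (hκ : 0 < κ) (hα : 2 ≤ α) (hN : 0 < N)
    (CS CT : Config) (hS : Legal κ CS) (hT : Legal κ CT)
    (hcardS : Multiset.card CS = N) (hcardT : Multiset.card CT = N)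
    (hU : CS.sum = CT.sum)
    (hpos : ∀ x ∈ CS.sum, 0 < x)
    (hsmall : ∀ x ∈ CS.sum, α * x ≤ κ)
    (hslack : (κ : ℚ) / (α + 1) + 3 * α * κ / ((α + 1) * N) ≤ (slackSum κ CS : ℚ) / N) :
    Reconfigurable κ CS CT := by
  have hNQ : (0:ℚ) < N := by exact_mod_cast hN
  have hAQ : (0:ℚ) < (α:ℚ)+1 := by positivity
  have hNne : (N:ℚ) ≠ 0 := ne_of_gt hNQ
  have hAne : ((α:ℚ)+1) ≠ 0 := ne_of_gt hAQ
  have h2 := mul_le_mul_of_nonneg_left hslack (le_of_lt (mul_pos hAQ hNQ))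
  have e1 : (((α:ℚ)+1)*N) * ((κ:ℚ)/(α+1) + 3*α*κ/((α+1)*N)) = (N:ℚ)*κ + 3*α*κ := by
    field_simp
  have e2 : (((α:ℚ)+1)*N) * ((slackSum κ CS : ℚ)/N) = ((α:ℚ)+1)*(slackSum κ CS) := by
    field_simp
  rw [e1, e2] at h2
  have h3 : N*κ + 3*(α*κ) ≤ (α+1)*(slackSum κ CS) := by
    have := h2
    push_cast at this
    exact_mod_cast by
      have h4 : ((N*κ + 3*(α*κ) : ℕ) : ℚ) ≤ (((α+1)*(slackSum κ CS) : ℕ) : ℚ) := by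
        push_cast
        linarith
      exact_mod_cast h4
  have hst := slack_total κ CS hS
  rw [hcardS] at hst
  have hbudget : (α+1)*(CS.sum).sum + 3*(α*κ) ≤ α*κ*N := by
    have e5 : (α+1)*(slackSum κ CS) + (α+1)*((CS.sum).sum) = (α+1)*(N*κ) := by
      rw [← Nat.mul_add, hst]
    have e6 : (α+1)*(N*κ) = α*κ*N + N*κ := by ring
    omega
  exact ML hκ hα N CS CT hS hT hcardS hcardT hU hpos hsmall hbudget
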